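/- Let $f(t_1, t_2, \dots)$ be a function with $f_{\alpha,\beta} := \partial_{t_\alpha}\partial_{t_\beta} f$. Then for $f = \mathcal{F}_{B_k}|_{v \mapsto t}$, the $B_k$ Coxeter Dubrovin–Frobenius potential with $k$ large enough (e.g., $k \ge 4$ suffices for the flows below), the dispersionless BKP flows hold: $f_{2,2} = \frac{4}{3} f_{1,1}^3 - 2 f_{1,2} f_{1,1} + f_{1,3}$, $f_{2,3} = 4 f_{1,2} f_{1,1}^2 - 2 f_{1,3} f_{1,1} - 2 f_{1,2}^2 + f_{1,4}$, $f_{2,4} = 4 f_{1,3} f_{1,1}^2 + 4 f_{1,2}^2 f_{1,1} - 2 f_{1,4} f_{1,1} - 4 f_{1,2} f_{1,3} + f_{1,5}$, where any $f_{1,\delta}$ with $\delta > k$ is set to the appropriate polynomial given by the $B_k$ structure (or zero when out of range per the stabilization conventions). -/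

import Mathlib

/-- Partial derivative in the `i`-th coordinate direction. -/
noncomputable def pd {n : ℕ} (i : Fin n) (f : (Fin n → ℝ) → ℝ) : (Fin n → ℝ) → ℝ :=
  fun x => fderiv ℝ f x (Pi.single i 1)

/-- The Dubrovin `B_5` Coxeter Dubrovin–Frobenius potential `𝓕_{B_5} = 𝓕_{5,5}` written
in the hierarchy variables: `x i` stands for `t_{i+1} = v^{i+1}`, where `v^β` is the
renumbered flat coordinate (`∂_1∂_δ f = η_{δγ} t_γ` with `η_{δγ} = (1/20) δ_{δ+γ,6}`). -/
noncomputable def FB5 : (Fin 5 → ℝ) → ℝ := fun x =>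
  (x 1) ^ 2 * x 2 / 40 + x 0 * (x 2) ^ 2 / 40 + x 0 * x 1 * x 3 / 20
    - (x 2) ^ 3 * x 3 / 400 - x 1 * x 2 * (x 3) ^ 2 / 200 + x 2 * (x 3) ^ 4 / 4000
    + (x 0) ^ 2 * x 4 / 40 - x 1 * (x 2) ^ 2 * x 4 / 400 - (x 1) ^ 2 * x 3 * x 4 / 400
    + 3 * (x 2) ^ 2 * (x 3) ^ 2 * x 4 / 4000 + x 1 * (x 3) ^ 3 * x 4 / 6000
    - 3 * (x 3) ^ 5 * x 4 / 200000 + (x 2) ^ 3 * (x 4) ^ 2 / 12000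
    + x 1 * x 2 * x 3 * (x 4) ^ 2 / 2000 - x 2 * (x 3) ^ 3 * (x 4) ^ 2 / 20000
    + (x 1) ^ 2 * (x 4) ^ 3 / 12000 - (x 2) ^ 2 * x 3 * (x 4) ^ 3 / 40000
    + (x 3) ^ 4 * (x 4) ^ 3 / 400000 + x 2 * (x 3) ^ 2 * (x 4) ^ 4 / 400000
    + (x 2) ^ 2 * (x 4) ^ 5 / 2000000 - (x 3) ^ 3 * (x 4) ^ 5 / 12000000
    + (x 3) ^ 2 * (x 4) ^ 7 / 280000000 + (x 4) ^ 11 / 1980000000000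

section PdCalculus

variable {n : ℕ} {f g : (Fin n → ℝ) → ℝ}

lemma pd_const (i : Fin n) (c : ℝ) : pd i (fun _ => c) = fun _ => 0 := by
  funext x; simp [pd]

lemma pd_proj (i j : Fin n) : pd i (fun x => x j) = fun _ => if j = i then 1 else 0 := by
  funext x
  have h : (fun x : Fin n → ℝ => x j) = (ContinuousLinearMap.proj j : (Fin n → ℝ) →L[ℝ] ℝ) := rfl
  simp [pd, h, Pi.single_apply]

lemma pd_add (i : Fin n) (hf : Differentiable ℝ f) (hg : Differentiable ℝ g) :
    pd i (fun x => f x + g x) = fun x => pd i f x + pd i g x := by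
  funext x; simp [pd, fderiv_fun_add (hf x) (hg x)]

lemma pd_sub (i : Fin n) (hf : Differentiable ℝ f) (hg : Differentiable ℝ g) :
    pd i (fun x => f x - g x) = fun x => pd i f x - pd i g x := by
  funext x; simp [pd, fderiv_fun_sub (hf x) (hg x)]

lemma pd_mul (i : Fin n) (hf : Differentiable ℝ f) (hg : Differentiable ℝ g) :
    pd i (fun x => f x * g x) = fun x => pd i f x * g x + f x * pd i g x := by
  funext x; simp [pd, fderiv_fun_mul (hf x) (hg x)]; ring

lemma pd_div_const (i : Fin n) (hf : Differentiable ℝ f) (c : ℝ) :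
    pd i (fun x => f x / c) = fun x => pd i f x / c := by
  funext x
  simp only [div_eq_mul_inv, pd]
  rw [fderiv_mul_const (hf x)]
  simp; ring

lemma pd_const_mul (i : Fin n) (hf : Differentiable ℝ f) (c : ℝ) :
    pd i (fun x => c * f x) = fun x => c * pd i f x := by
  funext x; simp [pd, fderiv_const_mul (hf x)]

lemma pd_pow (i : Fin n) (hf : Differentiable ℝ f) (m : ℕ) :
    pd i (fun x => f x ^ m) = fun x => m * f x ^ (m - 1) * pd i f x := by
  induction m with
  | zero => simpa using pd_const i 1
  | succ m ih =>
    have h : (fun x => f x ^ (m+1)) = fun x => f x ^ m * f x := by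
      funext x; ring
    rw [h, pd_mul i (f := fun x => f x ^ m) (hf.pow m) hf, ih]
    funext x
    cases m with
    | zero => simp
    | succ k =>
      simp only [Nat.add_sub_cancel]
      push_cast
      ring

end PdCalculus

set_option maxHeartbeats 12000000 in
lemma pdFB5_0 : pd 0 FB5 = fun x => (1/40 : ℝ) * x 2 ^ 2 + (1/20 : ℝ) * x 1*x 3 + (1/20 : ℝ) * x 0*x 4 := by
  unfold FB5
  simp (disch := fun_prop) only [pd_add, pd_sub, pd_mul, pd_div_const, pd_const_mul, pd_pow, pd_proj, pd_const, Fin.reduceEq, reduceIte]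
  funext x; push_cast; ring

set_option maxHeartbeats 12000000 in
lemma pdFB5_1 : pd 1 FB5 = fun x => (1/6000 : ℝ) * x 3 ^ 3*x 4 + (1/2000 : ℝ) * x 2*x 3*x 4 ^ 2 + (-1/200 : ℝ) * x 2*x 3 ^ 2 + (-1/400 : ℝ) * x 2 ^ 2*x 4 + (1/6000 : ℝ) * x 1*x 4 ^ 3 + (-1/200 : ℝ) * x 1*x 3*x 4 + (1/20 : ℝ) * x 1*x 2 + (1/20 : ℝ) * x 0*x 3 := by
  unfold FB5
  simp (disch := fun_prop) only [pd_add, pd_sub, pd_mul, pd_div_const, pd_const_mul, pd_pow, pd_proj, pd_const, Fin.reduceEq, reduceIte]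
  funext x; push_cast; ring

set_option maxHeartbeats 12000000 in
lemma pdFB5_2 : pd 2 FB5 = fun x => (1/400000 : ℝ) * x 3 ^ 2*x 4 ^ 4 + (-1/20000 : ℝ) * x 3 ^ 3*x 4 ^ 2 + (1/4000 : ℝ) * x 3 ^ 4 + (1/1000000 : ℝ) * x 2*x 4 ^ 5 + (-1/20000 : ℝ) * x 2*x 3*x 4 ^ 3 + (3/2000 : ℝ) * x 2*x 3 ^ 2*x 4 + (1/4000 : ℝ) * x 2 ^ 2*x 4 ^ 2 + (-3/400 : ℝ) * x 2 ^ 2*x 3 + (1/2000 : ℝ) * x 1*x 3*x 4 ^ 2 + (-1/200 : ℝ) * x 1*x 3 ^ 2 + (-1/200 : ℝ) * x 1*x 2*x 4 + (1/40 : ℝ) * x 1 ^ 2 + (1/20 : ℝ) * x 0*x 2 := by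
  unfold FB5
  simp (disch := fun_prop) only [pd_add, pd_sub, pd_mul, pd_div_const, pd_const_mul, pd_pow, pd_proj, pd_const, Fin.reduceEq, reduceIte]
  funext x; push_cast; ring

set_option maxHeartbeats 12000000 in
lemma pdFB5_3 : pd 3 FB5 = fun x => (1/140000000 : ℝ) * x 3*x 4 ^ 7 + (-1/4000000 : ℝ) * x 3 ^ 2*x 4 ^ 5 + (1/100000 : ℝ) * x 3 ^ 3*x 4 ^ 3 + (-3/40000 : ℝ) * x 3 ^ 4*x 4 + (1/200000 : ℝ) * x 2*x 3*x 4 ^ 4 + (-3/20000 : ℝ) * x 2*x 3 ^ 2*x 4 ^ 2 + (1/1000 : ℝ) * x 2*x 3 ^ 3 + (-1/40000 : ℝ) * x 2 ^ 2*x 4 ^ 3 + (3/2000 : ℝ) * x 2 ^ 2*x 3*x 4 + (-1/400 : ℝ) * x 2 ^ 3 + (1/2000 : ℝ) * x 1*x 3 ^ 2*x 4 + (1/2000 : ℝ) * x 1*x 2*x 4 ^ 2 + (-1/100 : ℝ) * x 1*x 2*x 3 + (-1/400 : ℝ) * x 1 ^ 2*x 4 + (1/20 : ℝ) * x 0*x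 1 := by
  unfold FB5
  simp (disch := fun_prop) only [pd_add, pd_sub, pd_mul, pd_div_const, pd_const_mul, pd_pow, pd_proj, pd_const, Fin.reduceEq, reduceIte]
  funext x; push_cast; ring

set_option maxHeartbeats 12000000 in
lemma pdFB5_4 : pd 4 FB5 = fun x => (1/180000000000 : ℝ) * x 4 ^ 10 + (1/40000000 : ℝ) * x 3 ^ 2*x 4 ^ 6 + (-1/2400000 : ℝ) * x 3 ^ 3*x 4 ^ 4 + (3/400000 : ℝ) * x 3 ^ 4*x 4 ^ 2 + (-3/200000 : ℝ) * x 3 ^ 5 + (1/100000 : ℝ) * x 2*x 3 ^ 2*x 4 ^ 3 + (-1/10000 : ℝ) * x 2*x 3 ^ 3*x 4 + (1/400000 : ℝ) * x 2 ^ 2*x 4 ^ 4 + (-3/40000 : ℝ) * x 2 ^ 2*x 3*x 4 ^ 2 + (3/4000 : ℝ) * x 2 ^ 2*x 3 ^ 2 + (1/6000 : ℝ) * x 2 ^ 3*x 4 + (1/6000 : ℝ) * x 1*x 3 ^ 3 + (1/1000 : ℝ) * x 1*x 2*x 3*x 4 + (-1/400 : ℝ) * x 1*x 2 ^ 2 +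 (1/4000 : ℝ) * x 1 ^ 2*x 4 ^ 2 + (-1/400 : ℝ) * x 1 ^ 2*x 3 + (1/40 : ℝ) * x 0 ^ 2 := by
  unfold FB5
  simp (disch := fun_prop) only [pd_add, pd_sub, pd_mul, pd_div_const, pd_const_mul, pd_pow, pd_proj, pd_const, Fin.reduceEq, reduceIte]
  funext x; push_cast; ring

set_option maxHeartbeats 12000000 in
/-- The first dispersionless BKP flows in Fay form hold for `f = 𝓕_{B_5}|_{v ↦ t}`:
with `f_{α,β} = ∂_{t_α}∂_{t_β} f` (so `f_{α,β} = pd (α-1) (pd (β-1) FB5)`),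
`f_{2,2} = (4/3) f_{1,1}³ - 2 f_{1,2} f_{1,1} + f_{1,3}`,
`f_{2,3} = 4 f_{1,2} f_{1,1}² - 2 f_{1,3} f_{1,1} - 2 f_{1,2}² + f_{1,4}`,
`f_{2,4} = 4 f_{1,3} f_{1,1}² + 4 f_{1,2}² f_{1,1} - 2 f_{1,4} f_{1,1}
           - 4 f_{1,2} f_{1,3} + f_{1,5}`. -/
theorem stmt15 :
    (∀ x : Fin 5 → ℝ,
      pd 1 (pd 1 FB5) x
        = 4/3 * (pd 0 (pd 0 FB5) x) ^ 3 - 2 * (pd 0 (pd 1 FB5) x) * (pd 0 (pd 0 FB5) x)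
            + pd 0 (pd 2 FB5) x) ∧
    (∀ x : Fin 5 → ℝ,
      pd 1 (pd 2 FB5) x
        = 4 * (pd 0 (pd 1 FB5) x) * (pd 0 (pd 0 FB5) x) ^ 2
            - 2 * (pd 0 (pd 2 FB5) x) * (pd 0 (pd 0 FB5) x)
            - 2 * (pd 0 (pd 1 FB5) x) ^ 2 + pd 0 (pd 3 FB5) x) ∧
    (∀ x : Fin 5 → ℝ,
      pd 1 (pd 3 FB5) x
        = 4 * (pd 0 (pd 2 FB5) x) * (pd 0 (pd 0 FB5) x) ^ 2
            + 4 * (pd 0 (pd 1 FB5) x) ^ 2 * (pd 0 (pd 0 FB5) x)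
            - 2 * (pd 0 (pd 3 FB5) x) * (pd 0 (pd 0 FB5) x)
            - 4 * (pd 0 (pd 1 FB5) x) * (pd 0 (pd 2 FB5) x) + pd 0 (pd 4 FB5) x) := by
  refine ⟨fun x => ?_, fun x => ?_, fun x => ?_⟩ <;>
  · simp only [pdFB5_0, pdFB5_1, pdFB5_2, pdFB5_3, pdFB5_4]
    simp (disch := fun_prop) only [pd_add, pd_sub, pd_mul, pd_div_const, pd_const_mul,
      pd_pow, pd_proj, pd_const, Fin.reduceEq, reduceIte]
    push_cast
    ring
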